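/- For E = E_{lr}(U, b, u) the upper annihilating series is given by: ann^j(E) = 0 × … × 0 × F^j (zeros in all of F^l, in U, and in the first r−j slots of F^r) for j = 1, …, r; ann^{r+1}(E) = 0 × … × 0 × U × F^r (zeros in F^l); and ann^{r+1+m}(E) = 0 × … × 0 × F^m × U × F^r (zeros in the first l−m slots of F^l) for m = 1, …, l; in particular ann^{r+1+l}(E) = E. -/

import Mathlib

variable {F : Type*} [Field F] {A : Type*} [AddCommGroup A] [Module F A]

/-- For a bilinear multiplication `mul` on `A` and a submodule `S`, the preimage in `A` of the
annihilator of `A/S`, i.e. `{x | x·A ⊆ S and A·x ⊆ S}`. -/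
def annSucc (mul : A →ₗ[F] A →ₗ[F] A) (S : Submodule F A) : Submodule F A where
  carrier := {x | ∀ y : A, mul x y ∈ S ∧ mul y x ∈ S}
  zero_mem' := by intro y; simp
  add_mem' := by
    intro a b ha hb y
    refine ⟨?_, ?_⟩
    · simpa [map_add, LinearMap.add_apply] using S.add_mem (ha y).1 (hb y).1
    · simpa [map_add, LinearMap.add_apply] using S.add_mem (ha y).2 (hb y).2
  smul_mem' := by
    intro c a ha y
    refine ⟨?_, ?_⟩
    · simpa [map_smul, LinearMap.smul_apply] using S.smul_mem c (ha y).1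
    · simpa [map_smul, LinearMap.smul_apply] using S.smul_mem c (ha y).2

/-- The upper annihilating series: `annSeq mul 0 = 0`, and
`annSeq mul (i+1)` is the preimage in `A` of `ann(A / annSeq mul i)`. -/
def annSeq (mul : A →ₗ[F] A →ₗ[F] A) : ℕ → Submodule F A
  | 0 => ⊥
  | i + 1 => annSucc mul (annSeq mul i)

/-- A basis is natural if the product of distinct basis vectors vanishes. -/
def IsNaturalBasis {ι : Type*} (mul : A →ₗ[F] A →ₗ[F] A) (e : Module.Basis ι F A) : Prop :=
  ∀ i j, i ≠ j → mul (e i) (e j) = 0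

/-- An evolution algebra: a commutative algebra admitting a natural basis. -/
def IsEvolutionAlgebra (mul : A →ₗ[F] A →ₗ[F] A) : Prop :=
  (∀ x y, mul x y = mul y x) ∧ ∃ (n : ℕ) (e : Module.Basis (Fin n) F A), IsNaturalBasis mul e

/-- The (nilpotent) algebra `(A, mul)` has type `[n_1, …, n_r]`:  `r` is the least index with
`ann^r(A) = A` and `n_i = dim ann^i(A) - dim ann^{i-1}(A)`. -/
def HasType (mul : A →ₗ[F] A →ₗ[F] A) (L : List ℕ) : Prop :=
  annSeq mul L.length = ⊤ ∧ (∀ j < L.length, annSeq mul j ≠ ⊤) ∧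
  ∀ (i : ℕ) (h : i < L.length),
    L.get ⟨i, h⟩ =
      Module.finrank F (annSeq mul (i + 1)) - Module.finrank F (annSeq mul i)


/-- (Here `l = a + 1`, `r = d + 1`.) For `E = E_{lr}(U, b, u)`:
`ann^j(E) = 0 × 0 × F^j` (last `j` slots of `F^r`) for `j = 1, …, r`;
`ann^{r+1}(E) = 0 × U × F^r`;
`ann^{r+1+m}(E) = 0 × F^m × U × F^r` (last `m` slots of `F^l`) for `m = 1, …, l`;
in particular `ann^{r+1+l}(E) = E`. -/
theorem Elr_annSeq
    (h2 : (2 : F) ≠ 0)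
    {U : Type*} [AddCommGroup U] [Module F U] [FiniteDimensional F U]
    (n : ℕ) (hdimU : Module.finrank F U = n)
    (b : U →ₗ[F] U →ₗ[F] F)
    (hbsymm : ∀ x y : U, b x y = b y x)
    (hbnd : ∀ x : U, (∀ y : U, b x y = 0) → x = 0)
    (u : U) (hu : u ≠ 0)
    (a d : ℕ)  -- `l = a + 1`, `r = d + 1`
    (mul : ((Fin (a + 1) → F) × U × (Fin (d + 1) → F)) →ₗ[F]
      ((Fin (a + 1) → F) × U × (Fin (d + 1) → F)) →ₗ[F]
      ((Fin (a + 1) → F) × U × (Fin (d + 1) → F)))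
    (hmul : ∀ (α γ : Fin (a + 1) → F) (x y : U) (β δ : Fin (d + 1) → F),
      mul (α, x, β) (γ, y, δ) =
        (Fin.cases (motive := fun _ => F) 0
            (fun j : Fin a => α j.castSucc * γ j.castSucc),
         (α (Fin.last a) * γ (Fin.last a)) • u,
         Fin.cases (motive := fun _ => F) (b x y)
            (fun j : Fin d => β j.castSucc * δ j.castSucc))) :
    (∀ j : ℕ, 1 ≤ j → j ≤ d + 1 →
      (annSeq mul j : Set ((Fin (a + 1) → F) × U × (Fin (d + 1) → F))) =
        {p | p.1 = 0 ∧ p.2.1 = 0 ∧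
          ∀ i : Fin (d + 1), (i : ℕ) + j < d + 1 → p.2.2 i = 0}) ∧
    ((annSeq mul (d + 2) : Set ((Fin (a + 1) → F) × U × (Fin (d + 1) → F))) =
      {p | p.1 = 0}) ∧
    (∀ m : ℕ, 1 ≤ m → m ≤ a + 1 →
      (annSeq mul (d + 2 + m) : Set ((Fin (a + 1) → F) × U × (Fin (d + 1) → F))) =
        {p | ∀ i : Fin (a + 1), (i : ℕ) + m < a + 1 → p.1 i = 0}) ∧
    annSeq mul (d + 2 + (a + 1)) = ⊤ := by
  classical
  -- abbreviation for the algebra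
  have hsymm : ∀ p q, mul p q = mul q p := by
    rintro ⟨α, x, β⟩ ⟨γ, y, δ⟩
    rw [hmul, hmul]
    refine Prod.ext ?_ (Prod.ext ?_ ?_)
    · funext i
      induction i using Fin.cases with
      | zero => simp
      | succ k => simp [mul_comm]
    · simp [mul_comm]
    · funext i
      induction i using Fin.cases with
      | zero => simpa using hbsymm x y
      | succ k => simp [mul_comm]
  have hmem : ∀ (S : Submodule F ((Fin (a + 1) → F) × U × (Fin (d + 1) → F))) p,
      p ∈ annSucc mul S ↔ ∀ q, mul p q ∈ S := by
    intro S p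
    constructor
    · exact fun h q => (h q).1
    · intro h q
      exact ⟨h q, by rw [hsymm]; exact h q⟩
  -- Step lemma for the S-range
  have key1 : ∀ j : ℕ, j ≤ d → ∀ p : (Fin (a + 1) → F) × U × (Fin (d + 1) → F),
      (∀ q, mul p q ∈ {p : (Fin (a + 1) → F) × U × (Fin (d + 1) → F) |
          p.1 = 0 ∧ p.2.1 = 0 ∧ ∀ i : Fin (d + 1), (i : ℕ) + j < d + 1 → p.2.2 i = 0}) ↔
      (p.1 = 0 ∧ p.2.1 = 0 ∧ ∀ i : Fin (d + 1), (i : ℕ) + (j + 1) < d + 1 → p.2.2 i = 0) := by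
    intro j hj
    rintro ⟨α, x, β⟩
    constructor
    · intro H
      have Hy : ∀ y : U,
          (Fin.cases (motive := fun _ => F) 0
              (fun k : Fin a => α k.castSucc * (fun _ => (1:F)) k.castSucc) = 0) ∧
          ((α (Fin.last a) * (1:F)) • u = 0) ∧
          (∀ i : Fin (d + 1), (i : ℕ) + j < d + 1 →
            (Fin.cases (motive := fun _ => F) (b x y)
              (fun k : Fin d => β k.castSucc * (fun _ => (1:F)) k.castSucc)) i = 0) := by
        intro y
        have := H ((fun _ => (1:F)), y, (fun _ => (1:F)))
        rw [hmul] at this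
        exact this
      have hαc : ∀ k : Fin a, α k.castSucc = 0 := by
        intro k
        have := congrFun (Hy 0).1 k.succ
        simpa using this
      have hαl : α (Fin.last a) = 0 := by
        have := (Hy 0).2.1
        rw [mul_one, smul_eq_zero] at this
        exact this.resolve_right hu
      have hα : α = 0 := by
        funext i
        induction i using Fin.lastCases with
        | last => exact hαl
        | cast k => exact hαc k
      have hx : x = 0 := by
        apply hbnd
        intro y
        have := (Hy y).2.2 0 (by simp; omega)
        simpa using this
      refine ⟨hα, hx, ?_⟩
      intro i hi
      have hid : (i : ℕ) < d := by omega
      have h0 := (Hy 0).2.2 (Fin.succ ⟨(i : ℕ), hid⟩) (by simp; omega)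
      have hcast : (Fin.castSucc ⟨(i : ℕ), hid⟩ : Fin (d + 1)) = i := by
        apply Fin.ext; simp
      simpa [hcast] using h0
    · rintro ⟨hα, hx, hβ⟩
      rintro ⟨γ, y, δ⟩
      rw [hmul]
      refine ⟨?_, ?_, ?_⟩
      · funext i
        induction i using Fin.cases with
        | zero => simp
        | succ k => simp [show α = 0 from hα]
      · simp [show α = 0 from hα]
      · intro i hi
        induction i using Fin.cases with
        | zero => simp [show x = 0 from hx]
        | succ k =>
          have hk : (k : ℕ) + (j + 1) < d + 1 := by have := hi; simp at this; omega
          have h0 : β k.castSucc = 0 := hβ k.castSucc (by simpa using hk)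
          simp [h0]
  -- Step lemma: from S_{d+1} to R_0
  have key2 : ∀ p : (Fin (a + 1) → F) × U × (Fin (d + 1) → F),
      (∀ q, mul p q ∈ {p : (Fin (a + 1) → F) × U × (Fin (d + 1) → F) |
          p.1 = 0 ∧ p.2.1 = 0 ∧ ∀ i : Fin (d + 1), (i : ℕ) + (d + 1) < d + 1 → p.2.2 i = 0}) ↔
      p.1 = 0 := by
    rintro ⟨α, x, β⟩
    constructor
    · intro H
      have H1 := H ((fun _ => (1:F)), 0, (fun _ => (1:F)))
      rw [hmul] at H1
      obtain ⟨h1, h2, -⟩ := H1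
      funext i
      induction i using Fin.lastCases with
      | last =>
        rw [mul_one, smul_eq_zero] at h2
        exact h2.resolve_right hu
      | cast k =>
        have := congrFun h1 k.succ
        simpa using this
    · intro hα
      rintro ⟨γ, y, δ⟩
      rw [hmul]
      refine ⟨?_, ?_, ?_⟩
      · funext i
        induction i using Fin.cases with
        | zero => simp
        | succ k => simp [show α = 0 from hα]
      · simp [show α = 0 from hα]
      · intro i hi
        omega
  -- Step lemma for the R-range
  have key3 : ∀ m : ℕ, ∀ p : (Fin (a + 1) → F) × U × (Fin (d + 1) → F),
      (∀ q, mul p q ∈ {p : (Fin (a + 1) → F) × U × (Fin (d + 1) → F) |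
          ∀ i : Fin (a + 1), (i : ℕ) + m < a + 1 → p.1 i = 0}) ↔
      (∀ i : Fin (a + 1), (i : ℕ) + (m + 1) < a + 1 → p.1 i = 0) := by
    intro m
    rintro ⟨α, x, β⟩
    constructor
    · intro H i hi
      have H1 := H ((fun _ => (1:F)), 0, (fun _ => (1:F)))
      rw [hmul] at H1
      have hia : (i : ℕ) < a := by omega
      have h0 := H1 (Fin.succ ⟨(i : ℕ), hia⟩) (by simp; omega)
      have hcast : (Fin.castSucc ⟨(i : ℕ), hia⟩ : Fin (a + 1)) = i := by
        apply Fin.ext; simp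
      simpa [hcast] using h0
    · intro hα
      rintro ⟨γ, y, δ⟩ i hi
      rw [hmul]
      induction i using Fin.cases with
      | zero => simp
      | succ k =>
        have hk : (k : ℕ) + (m + 1) < a + 1 := by have := hi; simp at this; omega
        have h0 : α k.castSucc = 0 := hα k.castSucc (by simpa using hk)
        simp [h0]
  -- the S-range of the series
  have hS : ∀ j : ℕ, j ≤ d + 1 →
      (annSeq mul j : Set ((Fin (a + 1) → F) × U × (Fin (d + 1) → F))) =
        {p | p.1 = 0 ∧ p.2.1 = 0 ∧
          ∀ i : Fin (d + 1), (i : ℕ) + j < d + 1 → p.2.2 i = 0} := by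
    intro j
    induction j with
    | zero =>
      intro _
      ext ⟨α, x, β⟩
      show (α, x, β) ∈ annSeq mul 0 ↔ _
      rw [annSeq]
      simp only [Submodule.mem_bot, Set.mem_setOf_eq, Prod.mk_eq_zero]
      constructor
      · rintro ⟨h1, h2, h3⟩
        exact ⟨h1, h2, fun i _ => by rw [h3]; rfl⟩
      · rintro ⟨h1, h2, h3⟩
        refine ⟨h1, h2, funext fun i => h3 i (by omega)⟩
    | succ j ih =>
      intro hj
      have ihj := ih (by omega)
      ext p
      show p ∈ annSeq mul (j + 1) ↔ _
      rw [annSeq, hmem]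
      have : ∀ q, (mul p q ∈ annSeq mul j ↔ mul p q ∈
          {p : (Fin (a + 1) → F) × U × (Fin (d + 1) → F) | p.1 = 0 ∧ p.2.1 = 0 ∧
            ∀ i : Fin (d + 1), (i : ℕ) + j < d + 1 → p.2.2 i = 0}) := by
        intro q
        rw [← ihj]
        rfl
      rw [forall_congr' this, key1 j (by omega)]
      rfl
  -- the R-range of the series
  have hR : ∀ m : ℕ, m ≤ a + 1 →
      (annSeq mul (d + 2 + m) : Set ((Fin (a + 1) → F) × U × (Fin (d + 1) → F))) =
        {p | ∀ i : Fin (a + 1), (i : ℕ) + m < a + 1 → p.1 i = 0} := by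
    intro m
    induction m with
    | zero =>
      intro _
      ext p
      show p ∈ annSeq mul (d + 2) ↔ _
      have : d + 2 = (d + 1) + 1 := rfl
      rw [this, annSeq, hmem]
      have hq : ∀ q, (mul p q ∈ annSeq mul (d + 1) ↔ mul p q ∈
          {p : (Fin (a + 1) → F) × U × (Fin (d + 1) → F) | p.1 = 0 ∧ p.2.1 = 0 ∧
            ∀ i : Fin (d + 1), (i : ℕ) + (d + 1) < d + 1 → p.2.2 i = 0}) := by
        intro q
        rw [← hS (d + 1) (le_refl _)]
        rfl
      rw [forall_congr' hq, key2]
      constructor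
      · intro h i _
        rw [h]; rfl
      · intro h
        funext i
        exact h i (by omega)
    | succ m ih =>
      intro hm
      have ihm := ih (by omega)
      ext p
      show p ∈ annSeq mul (d + 2 + (m + 1)) ↔ _
      have : d + 2 + (m + 1) = (d + 2 + m) + 1 := by omega
      rw [this, annSeq, hmem]
      have hq : ∀ q, (mul p q ∈ annSeq mul (d + 2 + m) ↔ mul p q ∈
          {p : (Fin (a + 1) → F) × U × (Fin (d + 1) → F) |
            ∀ i : Fin (a + 1), (i : ℕ) + m < a + 1 → p.1 i = 0}) := by
        intro q
        rw [← ihm]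
        rfl
      rw [forall_congr' hq, key3 m]
      exact Iff.rfl
  refine ⟨fun j hj1 hj2 => hS j hj2, ?_, fun m hm1 hm2 => hR m hm2, ?_⟩
  · have := hR 0 (by omega)
    rw [this]
    ext p
    simp only [Set.mem_setOf_eq]
    constructor
    · intro h
      funext i
      exact h i (by omega)
    · intro h i _
      rw [h]; rfl
  · have := hR (a + 1) (le_refl _)
    apply Submodule.ext
    intro p
    rw [show (p ∈ annSeq mul (d + 2 + (a + 1))) ↔ p ∈ (annSeq mul (d + 2 + (a + 1)) :
        Set ((Fin (a + 1) → F) × U × (Fin (d + 1) → F))) from Iff.rfl, this]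
    simp only [Set.mem_setOf_eq, Submodule.mem_top, iff_true]
    intro i hi
    omega
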